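/- Let p ≤ n be positive integers, let 2 ≤ α < 4 and c₀ > 0, and let w be a real random variable with E[w] = 0, E[w²] = 1, satisfying P(|w| ≥ t) ≥ c₀/t^α for all t ≥ 1. Let W = (w_{ij}) be a p × n random matrix whose entries are i.i.d. copies of w, and let Γ = (1/n) W Wᵀ. If K ≥ 1 and p ≥ (2/c₀) K^{α/2} n^{α/2 − 1}, then P( λ_max(Γ) ≥ K ) ≥ 1/2. -/

import Mathlib

open MeasureTheory ProbabilityTheory Matrix

/-- The largest eigenvalue of a real (symmetric) matrix, defined as the supremum of its
spectrum.  For a real symmetric matrix the spectrum is exactly the (nonempty, finite) set of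
its eigenvalues, so this is the largest eigenvalue. -/
noncomputable def lambdaMax {p : ℕ} (A : Matrix (Fin p) (Fin p) ℝ) : ℝ :=
  sSup (spectrum ℝ A)

lemma diag_le_lambdaMax {p : ℕ} (hp : 0 < p) (A : Matrix (Fin p) (Fin p) ℝ)
    (hA : A.IsHermitian) (i : Fin p) : A i i ≤ lambdaMax A := by
  have hne : (Finset.univ : Finset (Fin p)).Nonempty := ⟨i, Finset.mem_univ i⟩
  obtain ⟨k₀, -, hk₀⟩ := Finset.exists_max_image Finset.univ hA.eigenvalues hne
  set U : Matrix (Fin p) (Fin p) ℝ := (hA.eigenvectorUnitary : Matrix (Fin p) (Fin p) ℝ)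
  have hrow : ∑ k, (U i k) ^ 2 = 1 := by
    have h1 : (U * star U) i i = 1 := by
      rw [(Matrix.mem_unitaryGroup_iff).mp hA.eigenvectorUnitary.2]
      simp
    rw [Matrix.mul_apply] at h1
    simp only [Matrix.star_apply, star_trivial] at h1
    rw [← h1]
    exact Finset.sum_congr rfl fun k _ => sq (U i k)
  have hAii : A i i = ∑ k, hA.eigenvalues k * (U i k) ^ 2 := by
    conv_lhs => rw [hA.spectral_theorem, Unitary.conjStarAlgAut_apply]
    rw [Matrix.mul_apply]
    refine Finset.sum_congr rfl fun k _ => ?_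
    rw [Matrix.mul_diagonal]
    simp only [Matrix.star_apply, star_trivial, Function.comp_apply, RCLike.ofReal_real_eq_id,
      id_eq]
    ring
  have hle : A i i ≤ hA.eigenvalues k₀ := by
    rw [hAii]
    calc ∑ k, hA.eigenvalues k * (U i k) ^ 2
        ≤ ∑ k, hA.eigenvalues k₀ * (U i k) ^ 2 := by
          refine Finset.sum_le_sum fun k _ => ?_
          exact mul_le_mul_of_nonneg_right (hk₀ k (Finset.mem_univ k)) (sq_nonneg _)
      _ = hA.eigenvalues k₀ := by rw [← Finset.mul_sum, hrow, mul_one]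
  refine hle.trans (le_csSup ?_ (hA.eigenvalues_mem_spectrum_real k₀))
  exact (Matrix.finite_spectrum A).bddAbove

/-- Let `p ≤ n` be positive integers, `2 ≤ α < 4`, `c₀ > 0`, and let `w` be a real random
variable with `E[w] = 0`, `E[w²] = 1`, satisfying `P(|w| ≥ t) ≥ c₀ / t^α` for all `t ≥ 1`.
Let `W = (w_{ij})` be a `p × n` random matrix with i.i.d. entries distributed as `w`, and let
`Γ = (1/n) W Wᵀ`.  If `K ≥ 1` and `p ≥ (2/c₀) K^(α/2) n^(α/2 − 1)`, then
`P(λ_max(Γ) ≥ K) ≥ 1/2`. -/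
theorem stmt_2 {Ω : Type*} [MeasureSpace Ω] [IsProbabilityMeasure (ℙ : Measure Ω)]
    (p n : ℕ) (hp : 0 < p) (hpn : p ≤ n)
    (α c₀ : ℝ) (hα : 2 ≤ α) (hα4 : α < 4) (hc₀ : 0 < c₀)
    (w : Ω → ℝ) (hmean : ∫ ω, w ω = 0) (hvar : ∫ ω, (w ω) ^ 2 = 1)
    (htail : ∀ t : ℝ, 1 ≤ t → ENNReal.ofReal (c₀ / t ^ α) ≤ ℙ {ω | t ≤ |w ω|})
    (W : Fin p → Fin n → Ω → ℝ)
    (hindep : iIndepFun (fun ij : Fin p × Fin n => W ij.1 ij.2) ℙ)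
    (hident : ∀ i j, IdentDistrib (W i j) w ℙ ℙ)
    (K : ℝ) (hK : 1 ≤ K)
    (hpbig : (2 / c₀) * K ^ (α / 2) * (n : ℝ) ^ (α / 2 - 1) ≤ (p : ℝ)) :
    (1 : ENNReal) / 2
      ≤ ℙ {ω | K ≤ lambdaMax ((1 / (n : ℝ)) •
            (Matrix.of (fun i j => W i j ω) * (Matrix.of (fun i j => W i j ω))ᵀ))} := by
  have hn : 0 < n := hp.trans_le hpn
  have hn1 : (1:ℝ) ≤ (n:ℝ) := by exact_mod_cast hn
  set t : ℝ := Real.sqrt (K * n) with ht_def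
  have hKn0 : (0:ℝ) ≤ K * n := by positivity
  have ht1 : 1 ≤ t := by
    rw [ht_def, show (1:ℝ) = Real.sqrt 1 by simp]
    exact Real.sqrt_le_sqrt (by nlinarith)
  have ht0 : (0:ℝ) < t := lt_of_lt_of_le one_pos ht1
  set q : ℝ := c₀ / t ^ α with hq_def
  have htα : t ^ α = K ^ (α/2) * (n:ℝ) ^ (α/2) := by
    rw [ht_def, Real.sqrt_eq_rpow, ← Real.rpow_mul hKn0, show (1/2)*α = α/2 by ring,
      Real.mul_rpow (le_trans zero_le_one hK) (Nat.cast_nonneg n)]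
  have hq0 : 0 < q := by
    apply div_pos hc₀ (Real.rpow_pos_of_pos ht0 α)
  have hq1 : q ≤ 1 := by
    have h := (htail t ht1).trans prob_le_one
    exact_mod_cast (ENNReal.ofReal_le_one).mp h
  have hpnq : 2 ≤ (p:ℝ) * n * q := by
    have hb : (n:ℝ) ^ (α/2-1) * n = (n:ℝ) ^ (α/2) := by
      have h := Real.rpow_add (show (0:ℝ) < n by exact_mod_cast hn) (α/2-1) 1
      rw [Real.rpow_one] at h
      rw [← h]; norm_num
    have hab : 0 < K ^ (α/2) * (n:ℝ) ^ (α/2) := by positivity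
    have h2 : (2/c₀) * (K ^ (α/2) * (n:ℝ) ^ (α/2)) ≤ (p:ℝ) * n := by
      calc (2/c₀) * (K ^ (α/2) * (n:ℝ) ^ (α/2))
          = ((2/c₀) * K ^ (α/2) * (n:ℝ) ^ (α/2-1)) * n := by rw [← hb]; ring
        _ ≤ (p:ℝ) * n := mul_le_mul_of_nonneg_right hpbig (Nat.cast_nonneg n)
    have h3 : (2:ℝ) = (2/c₀) * (K ^ (α/2) * (n:ℝ) ^ (α/2)) * q := by
      rw [hq_def, htα]; field_simp
    rw [h3]
    exact mul_le_mul_of_nonneg_right h2 hq0.le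
  -- the bad set S of large values, and events
  set S : Set ℝ := {x | t ≤ |x|} with hS_def
  have hS : MeasurableSet S := (isClosed_le continuous_const continuous_abs).measurableSet
  set E : Fin p × Fin n → Set Ω := fun ij => (W ij.1 ij.2) ⁻¹' Sᶜ with hE_def
  have hEm : ∀ ij : Fin p × Fin n, ℙ (E ij) ≤ ENNReal.ofReal (1 - q) := by
    intro ij
    have hpre : ℙ ((W ij.1 ij.2) ⁻¹' S) = ℙ (w ⁻¹' S) :=
      (hident ij.1 ij.2).measure_mem_eq hS
    have htl : ENNReal.ofReal q ≤ ℙ ((W ij.1 ij.2) ⁻¹' S) := by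
      rw [hpre]; exact htail t ht1
    have hnm : NullMeasurableSet ((W ij.1 ij.2) ⁻¹' S) ℙ :=
      (hident ij.1 ij.2).aemeasurable_fst.nullMeasurable hS
    show ℙ ((W ij.1 ij.2) ⁻¹' Sᶜ) ≤ _
    rw [Set.preimage_compl, prob_compl_eq_one_sub₀ hnm]
    calc 1 - ℙ ((W ij.1 ij.2) ⁻¹' S) ≤ 1 - ENNReal.ofReal q := tsub_le_tsub_left htl 1
      _ = ENNReal.ofReal (1 - q) := by
          rw [ENNReal.ofReal_sub 1 hq0.le, ENNReal.ofReal_one]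
  -- independence: probability of the intersection
  have hprod : ℙ (⋂ ij ∈ (Finset.univ : Finset (Fin p × Fin n)), E ij)
      = ∏ ij ∈ (Finset.univ : Finset (Fin p × Fin n)), ℙ (E ij) := by
    exact hindep.measure_inter_preimage_eq_mul Finset.univ (fun ij _ => hS.compl)
  have hhalf : ℙ (⋂ ij ∈ (Finset.univ : Finset (Fin p × Fin n)), E ij) ≤ 1/2 := by
    rw [hprod]
    calc ∏ ij ∈ (Finset.univ : Finset (Fin p × Fin n)), ℙ (E ij)
        ≤ ∏ _ij ∈ (Finset.univ : Finset (Fin p × Fin n)), ENNReal.ofReal (1 - q) :=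
          Finset.prod_le_prod' fun ij _ => hEm ij
      _ = ENNReal.ofReal (1 - q) ^ (p * n) := by
          rw [Finset.prod_const]
          congr 1
          simp [Finset.card_univ]
      _ = ENNReal.ofReal ((1 - q) ^ (p * n)) := by
          rw [ENNReal.ofReal_pow (by linarith)]
      _ ≤ 1/2 := by
          have h1q : (1 : ℝ) - q ≤ Real.exp (-q) := by
            have := Real.add_one_le_exp (-q); linarith
          have hm : ((1:ℝ) - q) ^ (p * n) ≤ Real.exp (-q) ^ (p * n) :=
            pow_le_pow_left₀ (by linarith) h1q _
          have he : Real.exp (-q) ^ (p * n) = Real.exp (((p*n : ℕ) : ℝ) * (-q)) := by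
            rw [Real.exp_nat_mul]
          have hcast : ((p*n : ℕ) : ℝ) = (p:ℝ) * n := by push_cast; ring
          have hle2 : Real.exp (((p*n : ℕ) : ℝ) * (-q)) ≤ Real.exp (-2) := by
            apply Real.exp_le_exp.mpr
            rw [hcast]
            nlinarith
          have hexp2 : (2:ℝ) ≤ Real.exp 2 := by
            have := Real.add_one_le_exp (2:ℝ); linarith
          have he2 : Real.exp (-2) ≤ 1/2 := by
            rw [Real.exp_neg]
            rw [show (1:ℝ)/2 = 2⁻¹ by norm_num]
            exact inv_anti₀ two_pos hexp2
          have : ((1:ℝ) - q) ^ (p * n) ≤ 1/2 := by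
            calc ((1:ℝ) - q) ^ (p * n) ≤ Real.exp (-q) ^ (p * n) := hm
              _ = Real.exp (((p*n : ℕ) : ℝ) * (-q)) := he
              _ ≤ Real.exp (-2) := hle2
              _ ≤ 1/2 := he2
          calc ENNReal.ofReal ((1 - q) ^ (p * n)) ≤ ENNReal.ofReal (1/2) :=
              ENNReal.ofReal_le_ofReal this
            _ = 1/2 := by
              rw [show (1:ℝ)/2 = (2:ℝ)⁻¹ by norm_num, ENNReal.ofReal_inv_of_pos two_pos]
              norm_num
  -- inclusion of the "large entry" event in the target event
  have hsub : (⋂ ij ∈ (Finset.univ : Finset (Fin p × Fin n)), E ij)ᶜ ⊆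
      {ω | K ≤ lambdaMax ((1 / (n : ℝ)) •
            (Matrix.of (fun i j => W i j ω) * (Matrix.of (fun i j => W i j ω))ᵀ))} := by
    intro ω hω
    simp only [Set.mem_compl_iff, Set.mem_iInter, not_forall] at hω
    obtain ⟨ij, -, hij⟩ := hω
    have hbig : t ≤ |W ij.1 ij.2 ω| := by
      simpa [hE_def, hS_def] using hij
    set M : Matrix (Fin p) (Fin n) ℝ := Matrix.of (fun i j => W i j ω) with hM
    have hherm : ((1 / (n : ℝ)) • (M * Mᵀ)).IsHermitian := by
      have h1 : (M * Mᵀ).IsHermitian := by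
        rw [← Matrix.conjTranspose_eq_transpose_of_trivial]
        exact Matrix.isHermitian_mul_conjTranspose_self M
      show ((1 / (n : ℝ)) • (M * Mᵀ))ᴴ = _
      rw [Matrix.conjTranspose_smul, h1.eq, star_trivial]
    have hsq : K * n ≤ (W ij.1 ij.2 ω) ^ 2 := by
      have h2 : t ^ 2 ≤ |W ij.1 ij.2 ω| ^ 2 := pow_le_pow_left₀ ht0.le hbig 2
      rw [ht_def, Real.sq_sqrt hKn0, sq_abs] at h2
      exact h2
    have hsum : K * n ≤ ∑ j, (W ij.1 j ω) ^ 2 :=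
      le_trans hsq (Finset.single_le_sum (f := fun j => (W ij.1 j ω) ^ 2)
        (fun j _ => sq_nonneg _) (Finset.mem_univ ij.2))
    have hentry : ((1 / (n : ℝ)) • (M * Mᵀ)) ij.1 ij.1
        = (1 / (n : ℝ)) * ∑ j, (W ij.1 j ω) ^ 2 := by
      simp [Matrix.smul_apply, Matrix.mul_apply, Matrix.transpose_apply, hM, sq]
    have hn0 : (0:ℝ) < (n:ℝ) := by exact_mod_cast hn
    have hdiag : K ≤ ((1 / (n : ℝ)) • (M * Mᵀ)) ij.1 ij.1 := by
      rw [hentry]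
      calc K = (1 / (n:ℝ)) * (K * n) := by field_simp
        _ ≤ (1 / (n:ℝ)) * ∑ j, (W ij.1 j ω) ^ 2 :=
          mul_le_mul_of_nonneg_left hsum (by positivity)
    exact le_trans hdiag (diag_le_lambdaMax hp _ hherm ij.1)
  -- conclusion
  set C := ⋂ ij ∈ (Finset.univ : Finset (Fin p × Fin n)), E ij with hC
  have huniv : (1:ENNReal) ≤ ℙ Cᶜ + ℙ C := by
    have h := measure_union_le (μ := ℙ) Cᶜ C
    rw [Set.compl_union_self, measure_univ] at h
    exact h
  have h5 : (1:ENNReal) ≤ ℙ Cᶜ + 1/2 := le_trans huniv (add_le_add le_rfl hhalf)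
  have h4 : (1:ENNReal) - 1/2 ≤ ℙ Cᶜ := tsub_le_iff_right.mpr h5
  rw [show (1:ENNReal)/2 = 2⁻¹ from one_div 2] at h4 ⊢
  rw [ENNReal.one_sub_inv_two] at h4
  exact h4.trans (measure_mono hsub)
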